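/- Let (X,d) be a complete nonempty metric space and T : X → X a Z-contraction with respect to some simulation function. Then T has a unique fixed point u, and for every x₀ ∈ X the Picard sequence xₙ = T xₙ₋₁ converges to u. -/

import Mathlib

open Filter Topology

def IsSimulation (ζ : ℝ → ℝ → ℝ) : Prop :=
  ζ 0 0 = 0 ∧
  (∀ t s : ℝ, 0 < t → 0 < s → ζ t s < s - t) ∧
  (∀ (t s : ℕ → ℝ) (L : ℝ), 0 < L → (∀ n, 0 < t n) → (∀ n, 0 < s n) →
    Tendsto t atTop (𝓝 L) → Tendsto s atTop (𝓝 L) →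
    Filter.limsup (fun n => ζ (t n) (s n)) atTop < 0)

def IsMeirKeeler {X : Type*} [MetricSpace X] (T : X → X) : Prop :=
  ∀ ε > 0, ∃ δ > 0, ∀ x y : X, ε ≤ dist x y → dist x y < ε + δ → dist (T x) (T y) < ε

def IsZContraction {X : Type*} [MetricSpace X] (T : X → X) (ζ : ℝ → ℝ → ℝ) : Prop :=
  IsSimulation ζ ∧ ∀ x y : X, 0 ≤ ζ (dist (T x) (T y)) (dist x y)

section Aux

variable {X : Type*} [MetricSpace X] (T : X → X)

lemma zc_lt {ζ : ℝ → ℝ → ℝ} (hT : IsZContraction T ζ) {x y : X} (h : x ≠ y) :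
    dist (T x) (T y) < dist x y := by
  have hxy : 0 < dist x y := dist_pos.2 h
  rcases eq_or_lt_of_le (dist_nonneg (x := T x) (y := T y)) with h0 | h0
  · linarith
  · have := hT.1.2.1 _ _ h0 hxy
    have := hT.2 x y
    linarith

lemma zc_le {ζ : ℝ → ℝ → ℝ} (hT : IsZContraction T ζ) (x y : X) :
    dist (T x) (T y) ≤ dist x y := by
  rcases eq_or_ne x y with rfl | h
  · simp
  · exact (zc_lt T hT h).le

lemma zc_mk {ζ : ℝ → ℝ → ℝ} (hT : IsZContraction T ζ) : IsMeirKeeler T := by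
  by_contra hmk
  unfold IsMeirKeeler at hmk
  push_neg at hmk
  obtain ⟨ε, hε, H⟩ := hmk
  choose x y h1 h2 h3 using fun n : ℕ => H (1 / (n + 1 : ℝ)) (by positivity)
  set s : ℕ → ℝ := fun n => dist (x n) (y n) with hs
  set t : ℕ → ℝ := fun n => dist (T (x n)) (T (y n)) with ht
  have hts : ∀ n, t n ≤ s n := fun n => zc_le T hT _ _
  have hlim : Tendsto (fun n : ℕ => ε + 1 / (n + 1 : ℝ)) atTop (𝓝 ε) := by
    simpa using tendsto_const_nhds.add (tendsto_one_div_add_atTop_nhds_zero_nat : Tendsto (fun n : ℕ => 1 / ((n : ℝ) + 1)) atTop (𝓝 0))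
  have hslim : Tendsto s atTop (𝓝 ε) :=
    tendsto_of_tendsto_of_tendsto_of_le_of_le tendsto_const_nhds hlim h1
      (fun n => (h2 n).le)
  have htlim : Tendsto t atTop (𝓝 ε) :=
    tendsto_of_tendsto_of_tendsto_of_le_of_le tendsto_const_nhds hslim h3 hts
  have hneg := hT.1.2.2 t s ε hε (fun n => lt_of_lt_of_le hε (h3 n))
    (fun n => lt_of_lt_of_le hε (h1 n)) htlim hslim
  have hbdd : IsBoundedUnder (· ≤ ·) atTop (fun n => ζ (t n) (s n)) := by
    refine isBoundedUnder_of ⟨ε + 1, fun n => ?_⟩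
    have h4 := hT.1.2.1 (t n) (s n) (lt_of_lt_of_le hε (h3 n)) (lt_of_lt_of_le hε (h1 n))
    have h5 : s n < ε + 1 := lt_of_lt_of_le (h2 n) (by
      have : (1 : ℝ) / (n + 1) ≤ 1 := by
        rw [div_le_one (by positivity)]; linarith [Nat.cast_nonneg (α := ℝ) n]
      linarith)
    have h6 : 0 ≤ t n := dist_nonneg
    linarith
  have h0 : (0 : ℝ) ≤ limsup (fun n => ζ (t n) (s n)) atTop :=
    le_limsup_of_frequently_le (Frequently.of_forall fun n => hT.2 (x n) (y n)) hbdd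
  linarith

lemma mk_lt (hmk : IsMeirKeeler T) {x y : X} (h : x ≠ y) :
    dist (T x) (T y) < dist x y := by
  have hxy : 0 < dist x y := dist_pos.2 h
  obtain ⟨δ, hδ, H⟩ := hmk (dist x y) hxy
  exact H x y le_rfl (by linarith)

lemma mk_le (hmk : IsMeirKeeler T) (x y : X) :
    dist (T x) (T y) ≤ dist x y := by
  rcases eq_or_ne x y with rfl | h
  · simp
  · exact (mk_lt T hmk h).le

lemma mk_dist_to_zero (hmk : IsMeirKeeler T) (x₀ : X) :
    Tendsto (fun n => dist (T^[n+1] x₀) (T^[n] x₀)) atTop (𝓝 0) := by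
  set d : ℕ → ℝ := fun n => dist (T^[n+1] x₀) (T^[n] x₀) with hd
  have hstep : ∀ n, d (n + 1) ≤ d n := by
    intro n
    have : d (n + 1) = dist (T (T^[n+1] x₀)) (T (T^[n] x₀)) := by
      simp [hd, Function.iterate_succ_apply']
    rw [this]
    exact mk_le T hmk _ _
  have hanti : Antitone d := antitone_nat_of_succ_le hstep
  have hbdd : BddBelow (Set.range d) := ⟨0, by rintro _ ⟨n, rfl⟩; exact dist_nonneg⟩
  set r := ⨅ n, d n with hr
  have hlim : Tendsto d atTop (𝓝 r) := tendsto_atTop_ciInf hanti hbdd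
  have hr0 : 0 ≤ r := le_ciInf fun n => dist_nonneg
  rcases eq_or_lt_of_le hr0 with h | h
  · rwa [← h] at hlim
  · exfalso
    obtain ⟨δ, hδ, H⟩ := hmk r h
    obtain ⟨N, hN⟩ : ∃ N, d N < r + δ := by
      obtain ⟨N, hN⟩ := exists_lt_of_ciInf_lt (show r < r + δ by linarith)
      exact ⟨N, hN⟩
    have hge : ∀ n, r ≤ d n := fun n => ciInf_le hbdd n
    have : d (N + 1) < r := by
      have heq : d (N + 1) = dist (T (T^[N+1] x₀)) (T (T^[N] x₀)) := by
        simp [hd, Function.iterate_succ_apply']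
      rw [heq]
      exact H _ _ (hge N) hN
    exact absurd (hge (N + 1)) (not_le.2 this)

lemma mk_cauchy (hmk : IsMeirKeeler T) (x₀ : X) :
    CauchySeq (fun n => T^[n] x₀) := by
  rw [Metric.cauchySeq_iff]
  intro ε hε
  obtain ⟨δ₀, hδ₀, H⟩ := hmk (ε / 4) (by linarith)
  set δ : ℝ := min δ₀ (ε / 4) with hδdef
  have hδ : 0 < δ := lt_min hδ₀ (by linarith)
  have hδ1 : δ ≤ δ₀ := min_le_left _ _
  have hδ2 : δ ≤ ε / 4 := min_le_right _ _
  have H' : ∀ x y : X, ε / 4 ≤ dist x y → dist x y < ε / 4 + δ → dist (T x) (T y) < ε / 4 :=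
    fun x y h1 h2 => H x y h1 (by linarith)
  have hd0 := mk_dist_to_zero T hmk x₀
  obtain ⟨N, hN⟩ := Metric.tendsto_atTop.1 hd0 δ hδ
  set x : ℕ → X := fun n => T^[n] x₀ with hx
  have hdN : dist (x (N + 1)) (x N) < δ := by
    have := hN N le_rfl
    rwa [Real.dist_eq, sub_zero, abs_of_nonneg dist_nonneg] at this
  have claim : ∀ k, dist (x N) (x (N + k)) < ε / 4 + δ := by
    intro k
    induction k with
    | zero => simpa using by positivity
    | succ k ih =>
      have h1 : dist (x (N + 1)) (x (N + k + 1)) < ε / 4 := by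
        have heq : dist (x (N + 1)) (x (N + k + 1)) = dist (T (x N)) (T (x (N + k))) := by
          simp [hx, Function.iterate_succ_apply']
        rw [heq]
        rcases le_or_gt (ε / 4) (dist (x N) (x (N + k))) with h | h
        · exact H' _ _ h ih
        · exact lt_of_le_of_lt (mk_le T hmk _ _) h
      calc dist (x N) (x (N + (k + 1)))
          ≤ dist (x N) (x (N + 1)) + dist (x (N + 1)) (x (N + k + 1)) := by
            rw [show N + (k + 1) = N + k + 1 by ring]; exact dist_triangle _ _ _
        _ < δ + ε / 4 := by
            rw [dist_comm (x N)]; exact add_lt_add hdN h1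
        _ = ε / 4 + δ := by ring
  refine ⟨N, fun m hm n hn => ?_⟩
  obtain ⟨k, rfl⟩ := Nat.exists_eq_add_of_le hm
  obtain ⟨l, rfl⟩ := Nat.exists_eq_add_of_le hn
  calc dist (x (N + k)) (x (N + l))
      ≤ dist (x (N + k)) (x N) + dist (x N) (x (N + l)) := dist_triangle _ _ _
    _ < (ε / 4 + δ) + (ε / 4 + δ) := by
        rw [dist_comm (x (N + k))]; exact add_lt_add (claim k) (claim l)
    _ ≤ ε := by linarith

lemma mk_picard [CompleteSpace X] (hmk : IsMeirKeeler T) (x₀ : X) :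
    ∃ w : X, T w = w ∧ Tendsto (fun n => T^[n] x₀) atTop (𝓝 w) := by
  obtain ⟨w, hw⟩ := cauchySeq_tendsto_of_complete (mk_cauchy T hmk x₀)
  refine ⟨w, ?_, hw⟩
  have hcont : Continuous T :=
    (LipschitzWith.of_dist_le_mul (K := 1) fun x y => by
      simpa using mk_le T hmk x y).continuous
  have h1 : Tendsto (fun n => T^[n + 1] x₀) atTop (𝓝 w) :=
    hw.comp (tendsto_add_atTop_nat 1)
  have h2 : Tendsto (fun n => T (T^[n] x₀)) atTop (𝓝 (T w)) :=
    (hcont.tendsto w).comp hw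
  have h3 : Tendsto (fun n => T^[n + 1] x₀) atTop (𝓝 (T w)) := by
    simpa [Function.iterate_succ_apply'] using h2
  exact tendsto_nhds_unique h3 h1

end Aux

theorem z_contraction_fixed_point {X : Type*} [MetricSpace X] [CompleteSpace X] [Nonempty X]
    (T : X → X) (ζ : ℝ → ℝ → ℝ) (hT : IsZContraction T ζ) :
    ∃ u : X, T u = u ∧ (∀ v : X, T v = v → v = u) ∧
      ∀ x₀ : X, Tendsto (fun n => T^[n] x₀) atTop (𝓝 u) := by
  have hmk := zc_mk T hT
  obtain ⟨x₀⟩ := ‹Nonempty X›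
  obtain ⟨u, hu1, hu2⟩ := mk_picard T hmk x₀
  have huniq : ∀ v : X, T v = v → v = u := by
    intro v hv
    by_contra hne
    have := mk_lt T hmk hne
    rw [hv, hu1] at this
    exact absurd this (lt_irrefl _)
  refine ⟨u, hu1, huniq, fun y₀ => ?_⟩
  obtain ⟨w, hw1, hw2⟩ := mk_picard T hmk y₀
  exact (huniq w hw1) ▸ hw2
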